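/- Let R be a commutative ring, let b, c ∈ R, and let S be a subset of R. Let I be the ideal of the polynomial ring R[X] generated by the quadratic X² + bX + c together with all elements s·X for s ∈ S. Then the kernel of the composite ring homomorphism R → R[X] → R[X]/I (the constant-polynomial inclusion followed by the quotient map) is exactly the ideal of R generated by the set {s·c : s ∈ S}. -/

import Mathlib

open Polynomial

/-- Let `R` be a commutative ring, `b c : R`, `S ⊆ R`. Let `I` be the ideal of
`R[X]` generated by `X² + bX + c` together with all `s·X` for `s ∈ S`. Then the kernel of the
composite ring homomorphism `R → R[X] → R[X]/I` is exactly the ideal of `R` generated by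
`{s·c : s ∈ S}`. -/
theorem kernel_const_to_quotient {R : Type*} [CommRing R] (b c : R) (S : Set R) :
    RingHom.ker
      ((Ideal.Quotient.mk
          (Ideal.span ({X ^ 2 + C b * X + C c} ∪ (fun s : R => C s * X) '' S))).comp
        (C : R →+* R[X])) =
      Ideal.span ((fun s : R => s * c) '' S) := by
  set f : R[X] := X ^ 2 + C b * X + C c with hf_def
  set G : Set R[X] := (fun s : R => C s * X) '' S with hG
  set I : Ideal R[X] := Ideal.span ({f} ∪ G) with hI
  set K : Ideal R := Ideal.span S with hK
  set J : Ideal R := Ideal.span ((fun s : R => s * c) '' S) with hJ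
  have hJK : ∀ x ∈ K, c * x ∈ J := by
    intro x hx
    induction hx using Submodule.span_induction with
    | mem s hs => exact Ideal.subset_span ⟨s, hs, by rw [mul_comm]⟩
    | zero => simp
    | add x y _ _ hx hy => rw [mul_add]; exact J.add_mem hx hy
    | smul a x _ hx =>
      rw [smul_eq_mul, mul_left_comm]
      exact Ideal.mul_mem_left J a hx
  apply le_antisymm
  · intro r hr
    have hr' : (C r : R[X]) ∈ I := by
      rwa [RingHom.mem_ker, RingHom.comp_apply, Ideal.Quotient.eq_zero_iff_mem] at hr
    rw [hI, Ideal.span_union, Submodule.mem_sup] at hr'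
    obtain ⟨a, ha, t, ht, heq⟩ := hr'
    rw [Ideal.mem_span_singleton'] at ha
    obtain ⟨q, rfl⟩ := ha
    have hcoeff : ∀ u ∈ Ideal.span G, u.coeff 0 = 0 ∧ ∀ n, u.coeff n ∈ K := by
      intro u hu
      induction hu using Submodule.span_induction with
      | mem g hg =>
        obtain ⟨s, hs, rfl⟩ := hg
        refine ⟨by simp, fun n => ?_⟩
        rw [coeff_C_mul, coeff_X]
        split
        · simpa using Ideal.subset_span hs
        · simp
      | zero => simp
      | add x y _ _ hx hy =>
        exact ⟨by simp [hx.1, hy.1], fun n => by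
          rw [coeff_add]; exact K.add_mem (hx.2 n) (hy.2 n)⟩
      | smul h x _ hx =>
        refine ⟨?_, fun n => ?_⟩
        · rw [smul_eq_mul, mul_coeff_zero, hx.1, mul_zero]
        · rw [smul_eq_mul, coeff_mul]
          exact Ideal.sum_mem _ fun p _ => Ideal.mul_mem_left _ _ (hx.2 p.2)
    have htc := hcoeff t ht
    set π : R →+* R ⧸ K := Ideal.Quotient.mk K with hπ
    have hmapt : t.map π = 0 := by
      ext n
      simp [coeff_map, Ideal.Quotient.eq_zero_iff_mem.mpr (htc.2 n)]
      exact Ideal.Quotient.eq_zero_iff_mem.mpr (htc.2 n)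
    have hfmonic : f.Monic := by
      rw [hf_def]; monicity!
    have heq2 : C (π r) = q.map π * f.map π := by
      have h := congrArg (Polynomial.map π) heq
      rwa [Polynomial.map_add, Polynomial.map_mul, hmapt, add_zero, map_C, eq_comm] at h
    have hq0' : q.coeff 0 ∈ K := by
      by_cases htop : K = ⊤
      · rw [htop]; trivial
      · haveI : Nontrivial (R ⧸ K) := Ideal.Quotient.nontrivial_iff.mpr htop
        have hq0 : q.map π = 0 := by
          by_contra hne
          have hdeg : (q.map π * f.map π).degree = (q.map π).degree + (f.map π).degree :=
            ((hfmonic.map π).degree_mul (p := q.map π))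
          have hfd : (f.map π).degree = 2 := by
            rw [hf_def]
            simp only [Polynomial.map_add, Polynomial.map_mul, Polynomial.map_pow, map_X, map_C]
            compute_degree!
          rw [← heq2, hfd] at hdeg
          have hle : (q.map π).degree + 2 ≤ 0 := hdeg ▸ degree_C_le
          have h0 : (0 : WithBot ℕ) ≤ (q.map π).degree := zero_le_degree_iff.mpr hne
          have h2 : (2 : WithBot ℕ) ≤ (q.map π).degree + 2 := le_add_of_nonneg_left h0
          exact absurd (h2.trans hle) (by decide)
        have h := congrArg (fun p => Polynomial.coeff p 0) hq0
        simp only [coeff_map, coeff_zero] at h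
        exact (Ideal.Quotient.eq_zero_iff_mem).mp h
    have hr0 : r = c * q.coeff 0 := by
      have h := congrArg (fun p => Polynomial.coeff p 0) heq
      simp only [coeff_add, mul_coeff_zero, htc.1, add_zero, coeff_C_zero] at h
      have hf0 : f.coeff 0 = c := by rw [hf_def]; simp
      rw [hf0] at h
      rw [← h, mul_comm]
    rw [hr0]
    exact hJK _ hq0'
  · rw [hJ, Ideal.span_le]
    rintro _ ⟨s, hs, rfl⟩
    rw [SetLike.mem_coe, RingHom.mem_ker, RingHom.comp_apply,
      Ideal.Quotient.eq_zero_iff_mem]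
    have h1 : f ∈ I := Ideal.subset_span (Or.inl rfl)
    have h2 : C s * X ∈ I := Ideal.subset_span (Or.inr ⟨s, hs, rfl⟩)
    have hsc : (C (s * c) : R[X]) = C s * f - (C s * X) * (X + C b) := by
      rw [map_mul, hf_def]; ring
    rw [hsc]
    exact I.sub_mem (I.mul_mem_left _ h1) (I.mul_mem_right _ h2)
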